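/- Let s be a sesquilinear form on a finitely generated right Q-module V, with associated even skew-hermitian form h_s. Let d, e be natural numbers, v₀, …, v_d ∈ V and w₀, …, w_e ∈ V. Set b̃ = Σ_{i=0}^{d} Σ_{i'=0}^{e} a(tⁱ·ε, h_s(v_i, w_{i'})·t^{i'}·ε) and q̃ = q̃(v₀,…,v_d). Then b̃ and q̃ lie in 𝓕, deg b̃ ≤ d + e + 1, and deg q̃ ≤ 2d + 1. Moreover, if deg b̃ < d + e + 1 then h_s(v_d, w_e) ∈ K, and if deg q̃ < 2d + 1 then s(v_d, v_d) ∈ K. -/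

import Mathlib

open scoped TensorProduct

/-- `f` is a Laurent polynomial: a finite sum `Σ y_z · t^z` with `y_z ∈ K`. -/
def IsLaurent {K : Type} [Field K] (f : RatFunc K) : Prop :=
  ∃ c : ℤ →₀ K, f = c.sum fun z y => algebraMap K (RatFunc K) y * RatFunc.X ^ z

/-- `f` is a Laurent polynomial of degree at most `n` (degree = max |z| over nonzero
coefficients; `deg 0 = -∞`). -/
def LaurentDegLE {K : Type} [Field K] (f : RatFunc K) (n : ℕ) : Prop :=
  ∃ c : ℤ →₀ K, (∀ z : ℤ, c z ≠ 0 → |z| ≤ (n : ℤ)) ∧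
    f = c.sum fun z y => algebraMap K (RatFunc K) y * RatFunc.X ^ z

/-- The value `a(f·ε, g·ε) = u·(σ(f)·g − f·σ(g))` of the alternating form `a` on `I`,
expressed through the unique representations `f·ε`, `g·ε` of its arguments. -/
noncomputable def aForm {K : Type} [Field K] (σ : RatFunc K ≃+* RatFunc K) (u : K)
    (f g : RatFunc K) : RatFunc K :=
  algebraMap K (RatFunc K) u * (σ f * g - f * σ g)


noncomputable def Lmap (K : Type) [Field K] : (ℤ →₀ K) →+ RatFunc K :=
  AddMonoidHom.mk' (fun c => c.sum fun z y => algebraMap K (RatFunc K) y * RatFunc.X ^ z)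
    (fun c c' => Finsupp.sum_add_index' (by simp) (by intro z y y'; rw [map_add, add_mul]))

theorem Lmap_apply {K : Type} [Field K] (c : ℤ →₀ K) :
    Lmap K c = c.sum fun z y => algebraMap K (RatFunc K) y * RatFunc.X ^ z := rfl

theorem Lmap_single {K : Type} [Field K] (z : ℤ) (y : K) :
    Lmap K (Finsupp.single z y) = algebraMap K (RatFunc K) y * RatFunc.X ^ z := by
  rw [Lmap_apply, Finsupp.sum_single_index]
  rw [map_zero, zero_mul]

theorem Lmap_injective {K : Type} [Field K] : Function.Injective (Lmap K) := by
  rw [injective_iff_map_eq_zero]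
  intro c hc
  set N : ℕ := c.support.sup Int.natAbs with hNdef
  have hN : ∀ z ∈ c.support, -(N:ℤ) ≤ z := by
    intro z hz
    have := Finset.le_sup (f := Int.natAbs) hz
    omega
  set p : Polynomial K := c.sum fun z y => Polynomial.C y * Polynomial.X ^ (z + N).toNat with hp
  have hmap : algebraMap (Polynomial K) (RatFunc K) p = RatFunc.X ^ (N:ℕ) * Lmap K c := by
    rw [hp, map_finsuppSum, Lmap_apply, Finsupp.mul_sum]
    refine Finsupp.sum_congr fun z hz => ?_
    rw [map_mul, map_pow, RatFunc.algebraMap_C, RatFunc.algebraMap_X, ← RatFunc.algebraMap_eq_C]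
    have h1 : (RatFunc.X : RatFunc K) ^ (z + N).toNat
        = RatFunc.X ^ ((z : ℤ) + N) := by
      rw [← zpow_natCast]
      congr 1
      exact Int.toNat_of_nonneg (by have := hN z hz; omega)
    rw [h1, zpow_add₀ RatFunc.X_ne_zero, zpow_natCast]
    ring
  have hp0 : p = 0 := by
    apply RatFunc.algebraMap_injective
    rw [hmap, hc, mul_zero, map_zero]
  ext z₀
  by_cases hz₀ : z₀ ∈ c.support
  · have hcoeff : p.coeff (z₀ + N).toNat = c z₀ := by
      rw [hp, Finsupp.sum, Polynomial.finset_sum_coeff]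
      rw [Finset.sum_eq_single_of_mem z₀ hz₀]
      · rw [Polynomial.coeff_C_mul, Polynomial.coeff_X_pow, if_pos rfl, mul_one]
      · intro z hz hne
        rw [Polynomial.coeff_C_mul, Polynomial.coeff_X_pow, if_neg, mul_zero]
        have h1 := hN z hz
        have h2 := hN z₀ hz₀
        omega
    rw [← hcoeff, hp0, Polynomial.coeff_zero, Finsupp.coe_zero, Pi.zero_apply]
  · rw [Finsupp.notMem_support_iff.mp hz₀]
    simp

theorem degree_bounds_for_btilde_qtilde
    -- k is a field, K/k a degree-2 Galois extension with nontrivial automorphism ι,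
    -- b a nonzero element of k
    (k K : Type) [Field k] [Field K] [Algebra k K]
    (hrank : Module.finrank k K = 2)
    (ι : K ≃ₐ[k] K) (hι : ∃ x : K, ι x ≠ x)
    (hι2 : ∀ x : K, ι (ι x) = x)
    (hfix : ∀ x : K, ι x = x → ∃ c : k, algebraMap k K c = x)
    (b : k) (hb : b ≠ 0)
    -- Q = (K, ι, b) is the crossed-product quaternion k-algebra, a division ring,
    -- containing K via φ, with j·j = b, j·x = ι(x)·j, and Q = K ⊕ K·j
    (Q : Type) [DivisionRing Q] [Algebra k Q]
    (φ : K →ₐ[k] Q) (j : Q)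
    (hj2 : j * j = algebraMap k Q b)
    (hjx : ∀ x : K, j * φ x = φ (ι x) * j)
    (hQdec : ∀ q : Q, ∃! p : K × K, q = φ p.1 + φ p.2 * j)
    -- the canonical involution of Q
    (conj : Q → Q)
    (hconj_add : ∀ a b : Q, conj (a + b) = conj a + conj b)
    (hconj_mul : ∀ a b : Q, conj (a * b) = conj b * conj a)
    (hconj_K : ∀ x : K, conj (φ x) = φ (ι x))
    (hconj_j : conj j = -j)
    -- σ is the automorphism of K(t) acting as ι on K with σ(t) = b·t⁻¹
    (σ : RatFunc K ≃+* RatFunc K)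
    (hσK : ∀ x : K, σ (algebraMap K (RatFunc K) x) = algebraMap K (RatFunc K) (ι x))
    (hσt : σ RatFunc.X = algebraMap K (RatFunc K) (algebraMap k K b) * RatFunc.X⁻¹)
    -- Q_F = Q ⊗_k F, identified with K(t) ⊕ K(t)·j : it contains K(t) via ψ and an
    -- element J (the image of j) with J·J = b, J·ψ(f) = ψ(σ f)·J, Q_F = ψ(K(t)) ⊕ ψ(K(t))·J,
    -- and Q embeds via φ' compatibly with φ and j
    (QF : Type) [Ring QF]
    (ψ : RatFunc K →+* QF) (J : QF)
    (hJ2 : J * J = ψ (algebraMap K (RatFunc K) (algebraMap k K b)))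
    (hJf : ∀ f : RatFunc K, J * ψ f = ψ (σ f) * J)
    (hQFdec : ∀ q : QF, ∃! p : RatFunc K × RatFunc K, q = ψ p.1 + ψ p.2 * J)
    (φ' : Q →+* QF)
    (hφ'K : ∀ x : K, φ' (φ x) = ψ (algebraMap K (RatFunc K) x))
    (hφ'j : φ' j = J)
    -- u is a nonzero element of K with ι(u) = -u
    (u : K) (hu : u ≠ 0) (hιu : ι u = -u)
    -- V is a finitely generated right Q-module and s a sesquilinear form on V
    (V : Type) [AddCommGroup V] [Module Qᵐᵒᵖ V] [Module.Finite Qᵐᵒᵖ V]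
    (s : V → V → Q)
    (hs1 : ∀ v v' w : V, s (v + v') w = s v w + s v' w)
    (hs2 : ∀ v w w' : V, s v (w + w') = s v w + s v w')
    (hsesq : ∀ (v w : V) (x y : Q),
      s (MulOpposite.op x • v) (MulOpposite.op y • w) = conj x * s v w * y)
    -- r x i is the unique element of K(t) with x·tⁱ·ε = (r x i)·ε
    (r : Q → ℕ → RatFunc K)
    (hr : ∀ (x : Q) (i : ℕ),
      φ' x * (ψ (RatFunc.X ^ i) * (1 + J * ψ RatFunc.X⁻¹)) =
        ψ (r x i) * (1 + J * ψ RatFunc.X⁻¹))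
    (d e : ℕ) (v : Fin (d + 1) → V) (w : Fin (e + 1) → V)
    (btil qtil : RatFunc K)
    (hbtil : btil = ∑ i : Fin (d + 1), ∑ i' : Fin (e + 1),
      aForm σ u (RatFunc.X ^ (i : ℕ))
        (r (s (v i) (w i') - conj (s (w i') (v i))) (i' : ℕ)))
    (hqtil : qtil = (∑ i : Fin (d + 1), aForm σ u (RatFunc.X ^ (i : ℕ)) (r (s (v i) (v i)) (i : ℕ))) +
      ∑ i : Fin (d + 1), ∑ i' : Fin (d + 1),
        if (i : ℕ) < (i' : ℕ) then
          aForm σ u (RatFunc.X ^ (i : ℕ))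
            (r (s (v i) (v i') - conj (s (v i') (v i))) (i' : ℕ))
        else 0) :
    -- b̃ and q̃ lie in 𝓕 ...
    (IsLaurent btil ∧ σ btil = btil) ∧ (IsLaurent qtil ∧ σ qtil = qtil) ∧
    -- ... deg b̃ ≤ d+e+1 and deg q̃ ≤ 2d+1 ...
    LaurentDegLE btil (d + e + 1) ∧ LaurentDegLE qtil (2 * d + 1) ∧
    -- ... if deg b̃ < d+e+1 then h_s(v_d, w_e) ∈ K ...
    (LaurentDegLE btil (d + e) →
      ∃ y : K, s (v (Fin.last d)) (w (Fin.last e)) -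
        conj (s (w (Fin.last e)) (v (Fin.last d))) = φ y) ∧
    -- ... and if deg q̃ < 2d+1 then s(v_d, v_d) ∈ K
    (LaurentDegLE qtil (2 * d) → ∃ y : K, s (v (Fin.last d)) (v (Fin.last d)) = φ y) := by
  -- notation
  have hX0 : (RatFunc.X : RatFunc K) ≠ 0 := RatFunc.X_ne_zero
  set b' : K := algebraMap k K b with hb'def
  have hb'0 : b' ≠ 0 := fun h => hb (by
    exact (map_eq_zero_iff _ (algebraMap k K).injective).mp h)
  set C : K →+* RatFunc K := (algebraMap K (RatFunc K) : K →+* RatFunc K) with hCdef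
  have hCb'0 : C b' ≠ 0 := fun h => hb'0 ((map_eq_zero_iff C C.injective).mp h)
  set Y : RatFunc K := C b' * RatFunc.X⁻¹ with hYdef
  have hY0 : Y ≠ 0 := mul_ne_zero hCb'0 (inv_ne_zero hX0)
  have hσX : σ RatFunc.X = Y := hσt
  have hσb' : ∀ x : k, σ (C (algebraMap k K x)) = C (algebraMap k K x) := by
    intro x
    rw [hCdef, hσK, AlgEquiv.commutes]
  have hσY : σ Y = RatFunc.X := by
    rw [hYdef, map_mul, map_inv₀, hσb', hσX, hYdef, mul_inv, inv_inv]
    field_simp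
    rfl
  have hσ2 : ∀ f : RatFunc K, σ (σ f) = f := by
    have hpoly : ∀ p : Polynomial K,
        σ (σ (algebraMap (Polynomial K) (RatFunc K) p)) = algebraMap _ _ p := by
      intro p
      induction p using Polynomial.induction_on' with
      | add p q hp hq => rw [map_add, map_add, map_add, hp, hq]
      | monomial n a =>
        rw [← Polynomial.C_mul_X_pow_eq_monomial, map_mul, map_pow,
          RatFunc.algebraMap_C, RatFunc.algebraMap_X, ← RatFunc.algebraMap_eq_C]
        rw [map_mul, map_mul, map_pow, map_pow, ← hCdef, hσK, hσK, hι2, hσX, hσY]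
    intro f
    induction f using RatFunc.induction_on with
    | f p q hq =>
      rw [map_div₀, map_div₀, hpoly, hpoly]
  -- the quaternion decomposition
  set dec : Q → K × K := fun q => (hQdec q).choose with hdecdef
  have hdec : ∀ q : Q, q = φ (dec q).1 + φ (dec q).2 * j := fun q => (hQdec q).choose_spec.1
  -- computations in QF
  set E : QF := 1 + J * ψ RatFunc.X⁻¹ with hEdef
  have hψJ : ∀ f : RatFunc K, ψ f * J = J * ψ (σ f) := by
    intro f
    rw [hJf (σ f), hσ2]
  have hσXinv : σ RatFunc.X⁻¹ = RatFunc.X * (C b')⁻¹ := by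
    rw [map_inv₀, hσX, hYdef, mul_inv, inv_inv, mul_comm]
  have hψE : ∀ f : RatFunc K, ψ f * E = ψ f + ψ (f * RatFunc.X * (C b')⁻¹) * J := by
    intro f
    rw [hEdef, mul_add, mul_one, ← mul_assoc, hψJ, mul_assoc, ← map_mul, hJf, map_mul,
      hσ2, hσXinv, ← mul_assoc]
  have hεinj : ∀ f g : RatFunc K, ψ f * E = ψ g * E → f = g := by
    intro f g hfg
    obtain ⟨p, -, hup⟩ := hQFdec (ψ f * E)
    have h1 := hup (f, f * RatFunc.X * (C b')⁻¹) (by rw [hψE])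
    have h2 := hup (g, g * RatFunc.X * (C b')⁻¹) (by rw [hfg, hψE])
    have := h1.trans h2.symm
    exact congrArg Prod.fst this
  have hJE : J * E = ψ Y * E := by
    have h1 : J * E = J + ψ Y := by
      rw [hEdef, mul_add, mul_one, ← mul_assoc, hJ2, ← map_mul, hYdef, hCdef]
    have h2 : ψ Y * E = ψ Y + J := by
      rw [hψE]
      have : Y * RatFunc.X * (C b')⁻¹ = 1 := by
        rw [hYdef]
        field_simp
      rw [this, map_one, one_mul]
    rw [h1, h2, add_comm]
  have hrval : ∀ (x : Q) (i : ℕ),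
      r x i = C (dec x).1 * RatFunc.X ^ i + C (dec x).2 * Y ^ (i + 1) := by
    intro x i
    apply hεinj
    rw [← hr]
    calc φ' x * (ψ (RatFunc.X ^ i) * E)
        = (ψ (C (dec x).1) + ψ (C (dec x).2) * J) * (ψ (RatFunc.X ^ i) * E) := by
          rw [← hφ'K, ← hφ'K, ← hφ'j, ← map_mul, ← map_add, ← hdec]
      _ = ψ (C (dec x).1 * RatFunc.X ^ i) * E
          + ψ (C (dec x).2 * σ (RatFunc.X ^ i)) * (J * E) := by
          rw [add_mul, ← mul_assoc, ← map_mul, map_mul]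
          congr 1
          rw [mul_assoc, ← mul_assoc J, hJf, mul_assoc (ψ (σ (RatFunc.X ^ i))) J E,
            ← mul_assoc, ← map_mul]
      _ = ψ (C (dec x).1 * RatFunc.X ^ i + C (dec x).2 * Y ^ (i + 1)) * E := by
          rw [hJE, ← mul_assoc, ← map_mul, map_pow, hσX, mul_assoc, ← pow_succ,
            ← add_mul, map_add]
  set cof : Q → ℕ → ℕ → (ℤ →₀ K) := fun x i i' =>
    Finsupp.single ((i' : ℤ) - i) (u * (dec x).1 * b' ^ i)
    + Finsupp.single (-((i : ℤ) + i' + 1)) (u * (dec x).2 * b' ^ (i + i' + 1))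
    + Finsupp.single ((i : ℤ) - i') (-(u * ι (dec x).1 * b' ^ i'))
    + Finsupp.single ((i : ℤ) + i' + 1) (-(u * ι (dec x).2)) with hcofdef
  have hσr : ∀ (x : Q) (i : ℕ),
      σ (r x i) = C (ι (dec x).1) * Y ^ i + C (ι (dec x).2) * RatFunc.X ^ (i + 1) := by
    intro x i
    rw [hrval, map_add, map_mul, map_mul, map_pow, map_pow, hσX, hσY, hCdef, hσK, hσK]
  have hYpow : ∀ n : ℕ, Y ^ n = C (b' ^ n) * RatFunc.X ^ (-(n : ℤ)) := by
    intro n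
    rw [hYdef, mul_pow, map_pow, zpow_neg, zpow_natCast, inv_pow]
  have hcofL : ∀ (x : Q) (i i' : ℕ),
      aForm σ u (RatFunc.X ^ i) (r x i') = Lmap K (cof x i i') := by
    intro x i i'
    rw [hcofdef]
    simp only [map_add, Lmap_single]
    rw [aForm, hσr, hrval, map_pow, hσX]
    rw [hYpow i, hYpow (i' + 1)]
    push_cast
    simp only [map_mul, map_pow, map_neg, ← hCdef]
    rw [show ((i' : ℤ) - i) = (i' : ℤ) + (-(i : ℤ)) by ring,
      show ((i : ℤ) - i') = (i : ℤ) + (-(i' : ℤ)) by ring,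
      show (-((i : ℤ) + i' + 1)) = (-(i:ℤ)) + (-(i':ℤ)) + (-1 : ℤ) by ring,
      show ((i : ℤ) + i' + 1) = (i:ℤ) + (i':ℤ) + (1:ℤ) by ring]
    simp only [zpow_add₀ hX0, zpow_natCast, zpow_neg, zpow_one]
    ring
  have hcof_bd : ∀ (x : Q) (i i' : ℕ) (z : ℤ), cof x i i' z ≠ 0 → |z| ≤ (i : ℤ) + i' + 1 := by
    intro x i i' z hz
    rw [hcofdef] at hz
    simp only [Finsupp.add_apply, Finsupp.single_apply] at hz
    rw [abs_le]
    split_ifs at hz with h1 h2 h3 h4 <;> first | omega | simp at hz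
  have hcof_top : ∀ (x : Q) (i i' : ℕ), cof x i i' ((i : ℤ) + i' + 1) = -(u * ι (dec x).2) := by
    intro x i i'
    rw [hcofdef]
    simp only [Finsupp.add_apply, Finsupp.single_apply]
    rw [if_neg (by omega), if_neg (by omega), if_neg (by omega), if_pos trivial]
    simp
  -- σ-invariance of aForm values
  have hσa : ∀ f g : RatFunc K, σ (aForm σ u f g) = aForm σ u f g := by
    intro f g
    rw [aForm, map_mul, map_sub, map_mul, map_mul, hσ2 f, hσ2 g, hσK, hιu, map_neg]
    ring
  -- the coefficient functions of btil and qtil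
  set Cb : ℤ →₀ K := ∑ i : Fin (d+1), ∑ i' : Fin (e+1),
      cof (s (v i) (w i') - conj (s (w i') (v i))) (i : ℕ) (i' : ℕ) with hCbdef
  set Cq : ℤ →₀ K := (∑ i : Fin (d+1), cof (s (v i) (v i)) (i : ℕ) (i : ℕ))
    + ∑ i : Fin (d+1), ∑ i' : Fin (d+1),
        if (i : ℕ) < (i' : ℕ) then
          cof (s (v i) (v i') - conj (s (v i') (v i))) (i : ℕ) (i' : ℕ) else 0 with hCqdef
  have hbL : btil = Lmap K Cb := by
    rw [hbtil, hCbdef, map_sum]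
    refine Finset.sum_congr rfl fun i _ => ?_
    rw [map_sum]
    exact Finset.sum_congr rfl fun i' _ => hcofL _ _ _
  have hqL : qtil = Lmap K Cq := by
    rw [hqtil, hCqdef, map_add, map_sum, map_sum]
    congr 1
    · exact Finset.sum_congr rfl fun i _ => hcofL _ _ _
    · refine Finset.sum_congr rfl fun i _ => ?_
      rw [map_sum]
      refine Finset.sum_congr rfl fun i' _ => ?_
      split_ifs with h
      · exact hcofL _ _ _
      · exact (map_zero _).symm
  have hσb : σ btil = btil := by
    rw [hbtil, map_sum]
    refine Finset.sum_congr rfl fun i _ => ?_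
    rw [map_sum]
    exact Finset.sum_congr rfl fun i' _ => hσa _ _
  have hσq : σ qtil = qtil := by
    rw [hqtil, map_add, map_sum, map_sum]
    congr 1
    · exact Finset.sum_congr rfl fun i _ => hσa _ _
    · refine Finset.sum_congr rfl fun i _ => ?_
      rw [map_sum]
      refine Finset.sum_congr rfl fun i' _ => ?_
      rw [apply_ite σ, map_zero]
      split_ifs with h
      · exact hσa _ _
      · rfl
  -- degree bounds
  have hCb_bd : ∀ z : ℤ, Cb z ≠ 0 → |z| ≤ ((d + e + 1 : ℕ) : ℤ) := by
    intro z hz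
    by_contra hgt
    apply hz
    rw [hCbdef, Finsupp.finset_sum_apply]
    refine Finset.sum_eq_zero fun i _ => ?_
    rw [Finsupp.finset_sum_apply]
    refine Finset.sum_eq_zero fun i' _ => ?_
    by_contra h0
    refine hgt (le_trans (hcof_bd _ _ _ _ h0) ?_)
    have h1 : (i : ℕ) ≤ d := Nat.lt_succ_iff.mp i.isLt
    have h2 : (i' : ℕ) ≤ e := Nat.lt_succ_iff.mp i'.isLt
    push_cast
    omega
  have hCq_bd : ∀ z : ℤ, Cq z ≠ 0 → |z| ≤ ((2 * d + 1 : ℕ) : ℤ) := by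
    intro z hz
    by_contra hgt
    apply hz
    rw [hCqdef, Finsupp.add_apply, Finsupp.finset_sum_apply, Finsupp.finset_sum_apply]
    have hd : ∀ (x : Q) (i i' : ℕ), i ≤ d → i' ≤ d → cof x i i' z = 0 := by
      intro x i i' hi hi'
      by_contra h0
      refine hgt (le_trans (hcof_bd _ _ _ _ h0) ?_)
      push_cast
      omega
    rw [Finset.sum_eq_zero fun i _ => hd _ _ _ (Nat.lt_succ_iff.mp i.isLt)
        (Nat.lt_succ_iff.mp i.isLt), Finset.sum_eq_zero, add_zero]
    intro i _
    rw [Finsupp.finset_sum_apply]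
    refine Finset.sum_eq_zero fun i' _ => ?_
    split_ifs with h
    · exact hd _ _ _ (Nat.lt_succ_iff.mp i.isLt) (Nat.lt_succ_iff.mp i'.isLt)
    · rfl
  -- top coefficients
  have hCb_top : Cb ((d : ℤ) + e + 1) =
      -(u * ι ((dec (s (v (Fin.last d)) (w (Fin.last e))
        - conj (s (w (Fin.last e)) (v (Fin.last d))))).2)) := by
    rw [hCbdef, Finsupp.finset_sum_apply,
      Finset.sum_eq_single_of_mem (Fin.last d) (Finset.mem_univ _)]
    · rw [Finsupp.finset_sum_apply,
        Finset.sum_eq_single_of_mem (Fin.last e) (Finset.mem_univ _)]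
      · exact hcof_top _ d e
      · intro i' _ hne
        by_contra h0
        have h1 := le_trans (le_abs_self _) (hcof_bd _ _ _ _ h0)
        have h2 : (i' : ℕ) ≠ e := by simpa [Fin.ext_iff] using hne
        have h3 : (i' : ℕ) ≤ e := Nat.lt_succ_iff.mp i'.isLt
        simp only [Fin.val_last] at h1
        push_cast at h1
        omega
    · intro i _ hne
      rw [Finsupp.finset_sum_apply]
      refine Finset.sum_eq_zero fun i' _ => ?_
      by_contra h0
      have h1 := le_trans (le_abs_self _) (hcof_bd _ _ _ _ h0)
      have h2 : (i : ℕ) ≠ d := by simpa [Fin.ext_iff] using hne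
      have h3 : (i : ℕ) ≤ d := Nat.lt_succ_iff.mp i.isLt
      have h4 : (i' : ℕ) ≤ e := Nat.lt_succ_iff.mp i'.isLt
      push_cast at h1
      omega
  have hCq_top : Cq ((d : ℤ) + d + 1) =
      -(u * ι ((dec (s (v (Fin.last d)) (v (Fin.last d)))).2)) := by
    rw [hCqdef, Finsupp.add_apply, Finsupp.finset_sum_apply, Finsupp.finset_sum_apply]
    have hoff : ∀ i : Fin (d+1), (∑ i' : Fin (d+1),
        if (i : ℕ) < (i' : ℕ) then
          cof (s (v i) (v i') - conj (s (v i') (v i))) (i : ℕ) (i' : ℕ) else 0)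
          ((d : ℤ) + d + 1) = 0 := by
      intro i
      rw [Finsupp.finset_sum_apply]
      refine Finset.sum_eq_zero fun i' _ => ?_
      split_ifs with h
      · by_contra h0
        have h1 := le_trans (le_abs_self _) (hcof_bd _ _ _ _ h0)
        have h3 : (i' : ℕ) ≤ d := Nat.lt_succ_iff.mp i'.isLt
        push_cast at h1
        omega
      · rfl
    rw [Finset.sum_eq_zero fun i _ => hoff i, add_zero,
      Finset.sum_eq_single_of_mem (Fin.last d) (Finset.mem_univ _)]
    · exact hcof_top _ d d
    · intro i _ hne
      by_contra h0
      have h1 := le_trans (le_abs_self _) (hcof_bd _ _ _ _ h0)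
      have h2 : (i : ℕ) ≠ d := by simpa [Fin.ext_iff] using hne
      have h3 : (i : ℕ) ≤ d := Nat.lt_succ_iff.mp i.isLt
      push_cast at h1
      omega
  -- a helper to extract membership in K from vanishing top coefficient
  have hext : ∀ (x : Q), ι ((dec x).2) = 0 → ∃ y : K, x = φ y := by
    intro x h1
    have h2 : (dec x).2 = 0 := by
      have := congrArg ι h1
      rwa [hι2, map_zero] at this
    refine ⟨(dec x).1, ?_⟩
    conv_lhs => rw [hdec x]
    rw [h2, map_zero, zero_mul, add_zero]
  refine ⟨⟨⟨Cb, by rw [hbL, Lmap_apply]⟩, hσb⟩, ⟨⟨Cq, by rw [hqL, Lmap_apply]⟩, hσq⟩,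
    ⟨Cb, hCb_bd, by rw [hbL, Lmap_apply]⟩, ⟨Cq, hCq_bd, by rw [hqL, Lmap_apply]⟩, ?_, ?_⟩
  · rintro ⟨c', hc'bd, hc'⟩
    have hCbc : Cb = c' := Lmap_injective (by rw [← hbL, hc', Lmap_apply])
    have h0 : Cb ((d : ℤ) + e + 1) = 0 := by
      rw [hCbc]
      by_contra h
      have h1 := hc'bd _ h
      have h2 := le_trans (le_abs_self _) h1
      push_cast at h2
      omega
    rw [hCb_top] at h0
    apply hext
    rcases mul_eq_zero.mp (neg_eq_zero.mp h0) with h | h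
    · exact absurd h hu
    · exact h
  · rintro ⟨c', hc'bd, hc'⟩
    have hCqc : Cq = c' := Lmap_injective (by rw [← hqL, hc', Lmap_apply])
    have h0 : Cq ((d : ℤ) + d + 1) = 0 := by
      rw [hCqc]
      by_contra h
      have h1 := hc'bd _ h
      have h2 := le_trans (le_abs_self _) h1
      push_cast at h2
      omega
    rw [hCq_top] at h0
    apply hext
    rcases mul_eq_zero.mp (neg_eq_zero.mp h0) with h | h
    · exact absurd h hu
    · exact h
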